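/- arXiv:2212.03705 — 7 statements merged into one kernel-verified Lean document; each statement's English description precedes it below -/
import Mathlib

section
/- Let A : ℝ → Matrix (Fin n) (Fin n) ℝ be continuous and let F(t,s) solve the forward equation ∂/∂s F(t,s) = F(t,s) A(s), F(t,t) = I. Then F also satisfies the backward equation: ∂/∂t F(t,s) = −A(t) F(t,s) with F(s,s) = I. -/
open Matrix

namespace ProductIntegralBackwardAux

attribute [local instance] Matrix.normedAddCommGroup Matrix.normedSpace

variable {n : ℕ}

private lemma norm_mul_le' (Z B : Matrix (Fin n) (Fin n) ℝ) :
    ‖Z * B‖ ≤ (n * ‖B‖) * ‖Z‖ := by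
  rw [Matrix.norm_le_iff (by positivity)]
  intro i j
  rw [Matrix.mul_apply]
  calc ‖∑ k, Z i k * B k j‖ ≤ ∑ k, ‖Z i k * B k j‖ := norm_sum_le _ _
    _ ≤ ∑ _k : Fin n, ‖Z‖ * ‖B‖ := by
        refine Finset.sum_le_sum fun k _ => ?_
        rw [norm_mul]
        exact mul_le_mul (Z.norm_entry_le_entrywise_sup_norm)
          (B.norm_entry_le_entrywise_sup_norm) (norm_nonneg _) (norm_nonneg _)
    _ = (n * ‖B‖) * ‖Z‖ := by
        simp [Finset.sum_const, Finset.card_univ, nsmul_eq_mul]; ring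

private lemma uniq (A : ℝ → Matrix (Fin n) (Fin n) ℝ) (hA : Continuous A)
    (X Y : ℝ → Matrix (Fin n) (Fin n) ℝ)
    (hX : ∀ u, HasDerivAt X (X u * A u) u)
    (hY : ∀ u, HasDerivAt Y (Y u * A u) u)
    (s₀ : ℝ) (h0 : X s₀ = Y s₀) (u : ℝ) : X u = Y u := by
  set a := min s₀ u - 1 with ha
  set b := max s₀ u + 1 with hb
  have hs₀ : s₀ ∈ Set.Ioo a b := by
    constructor
    · have := min_le_left s₀ u; linarith
    · have := le_max_left s₀ u; linarith
  have hu : u ∈ Set.Ioo a b := by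
    constructor
    · have := min_le_right s₀ u; linarith
    · have := le_max_right s₀ u; linarith
  have hab : a ≤ b := le_of_lt (lt_trans hu.1 hu.2)
  obtain ⟨C, hC⟩ := IsCompact.exists_bound_of_continuousOn (isCompact_Icc (a := a) (b := b))
    hA.continuousOn
  set v : ℝ → Matrix (Fin n) (Fin n) ℝ → Matrix (Fin n) (Fin n) ℝ :=
    fun t Z => Z * A (max a (min b t)) with hv_def
  have hclamp : ∀ t : ℝ, max a (min b t) ∈ Set.Icc a b := by
    intro t
    constructor
    · exact le_max_left _ _
    · exact max_le hab (min_le_left _ _)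
  have hclamp_eq : ∀ t ∈ Set.Ioo a b, max a (min b t) = t := by
    intro t ht
    rw [min_eq_right ht.2.le, max_eq_right ht.1.le]
  have hv : ∀ t, LipschitzWith (Real.toNNReal (n * C)) (v t) := by
    intro t
    apply LipschitzWith.of_dist_le_mul
    intro p q
    rw [dist_eq_norm, dist_eq_norm]
    have : v t p - v t q = (p - q) * A (max a (min b t)) := by
      simp [hv_def, sub_mul]
    rw [this]
    calc ‖(p - q) * A (max a (min b t))‖
        ≤ (n * ‖A (max a (min b t))‖) * ‖p - q‖ := norm_mul_le' _ _
      _ ≤ Real.toNNReal (n * C) * ‖p - q‖ := by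
          apply mul_le_mul_of_nonneg_right _ (norm_nonneg _)
          have h1 : ‖A (max a (min b t))‖ ≤ C := hC _ (hclamp t)
          have h2 : (n : ℝ) * ‖A (max a (min b t))‖ ≤ n * C :=
            mul_le_mul_of_nonneg_left h1 (Nat.cast_nonneg n)
          calc (n : ℝ) * ‖A (max a (min b t))‖ ≤ n * C := h2
            _ ≤ Real.toNNReal (n * C) := Real.le_coe_toNNReal _
  have key := ODE_solution_unique_of_mem_Icc (v := v) (s := fun _ => Set.univ)
    (fun t _ => lipschitzOnWith_univ.2 (hv t)) hs₀
    (fun x _ => (hX x).continuousAt.continuousWithinAt)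
    (fun x hx => by rw [hv_def]; simp only [hclamp_eq x hx]; exact hX x)
    (fun _ _ => Set.mem_univ _)
    (fun x _ => (hY x).continuousAt.continuousWithinAt)
    (fun x hx => by rw [hv_def]; simp only [hclamp_eq x hx]; exact hY x)
    (fun _ _ => Set.mem_univ _)
    h0
  exact key (Set.mem_Icc_of_Ioo hu)

end ProductIntegralBackwardAux

section Main

attribute [local instance] Matrix.normedAddCommGroup Matrix.normedSpace

/-- The product integral F(t,s), defined via the forward equation
∂/∂s F(t,s) = F(t,s) A(s) with F(t,t) = I, also satisfies the backward equation
∂/∂t F(t,s) = -A(t) F(t,s) with F(s,s) = I. -/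
theorem product_integral_backward (n : ℕ) (A : ℝ → Matrix (Fin n) (Fin n) ℝ)
    (hA : Continuous A)
    (F : ℝ → ℝ → Matrix (Fin n) (Fin n) ℝ)
    (hinit : ∀ t : ℝ, F t t = 1)
    (hode : ∀ t s : ℝ, ∀ i j : Fin n,
      HasDerivAt (fun u => F t u i j) ((F t s * A s) i j) s) :
    ∀ t s : ℝ, ∀ i j : Fin n,
      HasDerivAt (fun u => F u s i j) ((-(A t) * F t s) i j) t := by
  -- matrix-valued forward derivative
  have hode' : ∀ t s : ℝ, HasDerivAt (fun u => F t u) (F t s * A s) s := by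
    intro t s
    exact hasDerivAt_pi.mpr fun i => hasDerivAt_pi.mpr fun j => hode t s i j
  -- semigroup property
  have hsg : ∀ t s u : ℝ, F t u = F t s * F s u := by
    intro t s u
    have hY : ∀ w : ℝ, HasDerivAt (fun w => F t s * F s w) ((F t s * F s w) * A w) w := by
      intro w
      have h1 : HasDerivAt (fun w => F t s * F s w) (F t s * (F s w * A w)) w := by
        refine hasDerivAt_pi.mpr fun i => hasDerivAt_pi.mpr fun j => ?_
        have h2 : ∀ (M : Matrix (Fin n) (Fin n) ℝ), (F t s * M) i j
            = ∑ k, F t s i k * M k j := fun M => Matrix.mul_apply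
        simp only [h2]
        exact HasDerivAt.fun_sum fun k _ => (hode s w k j).const_mul (F t s i k)
      rwa [← mul_assoc] at h1
    exact ProductIntegralBackwardAux.uniq A hA (fun u => F t u) (fun u => F t s * F s u)
      (hode' t) hY s (by show F t s = F t s * F s s; rw [hinit, mul_one]) u
  -- inverses
  have hunit : ∀ t s : ℝ, F t s * F s t = 1 := by
    intro t s
    have := hsg t s t
    rw [hinit] at this
    exact this.symm
  intro t s
  -- continuity of u ↦ F u s at t
  have hcont : Continuous fun u => F s u :=
    continuous_iff_continuousAt.mpr fun x => (hode' s x).continuousAt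
  have hdetne : (F s t).det ≠ 0 := by
    have h1 : (F s t).det * (F t s).det = 1 := by
      rw [← Matrix.det_mul, hunit s t, Matrix.det_one]
    exact left_ne_zero_of_mul_eq_one h1
  have hgeq : (fun u => F u s) = fun u => Ring.inverse (F s u).det • (F s u).adjugate := by
    funext u
    have h1 : (F s u)⁻¹ = F u s := Matrix.inv_eq_left_inv (hunit u s)
    rw [← h1, Matrix.inv_def]
  have hgc : ContinuousAt (fun u => F u s) t := by
    rw [hgeq]
    refine ContinuousAt.fun_smul ?_ (hcont.matrix_adjugate.continuousAt)
    have : (fun u => Ring.inverse (F s u).det) = fun u => ((F s u).det)⁻¹ := by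
      funext u; rw [Ring.inverse_eq_inv']
    rw [this]
    exact (hcont.matrix_det.continuousAt).inv₀ hdetne
  -- the backward derivative, matrix-valued
  have key : HasDerivAt (fun u => F u s) (-(A t) * F t s) t := by
    refine hasDerivAt_iff_tendsto_slope.mpr ?_
    have hsl : Filter.Tendsto (slope (fun u => F s u) t) (nhdsWithin t {t}ᶜ)
        (nhds (F s t * A t)) := hasDerivAt_iff_tendsto_slope.mp (hode' s t)
    have hgt : Filter.Tendsto (fun u => F u s) (nhdsWithin t {t}ᶜ) (nhds (F t s)) :=
      hgc.tendsto.mono_left nhdsWithin_le_nhds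
    have hlim : Filter.Tendsto
        (fun u => F u s * -(slope (fun w => F s w) t u) * F t s) (nhdsWithin t {t}ᶜ)
        (nhds (F t s * -(F s t * A t) * F t s)) :=
      (hgt.mul hsl.neg).mul tendsto_const_nhds
    have hval : F t s * -(F s t * A t) * F t s = -(A t) * F t s := by
      rw [mul_neg, neg_mul, neg_mul]
      congr 1
      rw [← mul_assoc, hunit t s, one_mul]
    rw [hval] at hlim
    refine hlim.congr' ?_
    filter_upwards [self_mem_nhdsWithin] with u hu
    have hu' : (u : ℝ) ≠ t := hu
    have hid : F u s * (F s t - F s u) * F t s = F u s - F t s := by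
      rw [mul_sub, sub_mul, mul_assoc, hunit s t, mul_one, hunit u s, one_mul]
    have hslope : ∀ (f : ℝ → Matrix (Fin n) (Fin n) ℝ) (x y : ℝ),
        slope f x y = (y - x)⁻¹ • (f y - f x) := by
      intro f x y; rw [slope_def_module]
    rw [hslope, hslope, ← hid, ← smul_neg, neg_sub, mul_smul_comm, smul_mul_assoc]
  intro i j
  exact hasDerivAt_pi.mp (hasDerivAt_pi.mp key i) j

end Main
end

section
/- Let T : ℝ → Matrix (Fin n) (Fin n) ℝ be continuous such that for every x, T(x) is a sub-intensity matrix: off-diagonal entries are nonnegative and each row sum is nonpositive. Let F(t,s) be the product integral of T from t to s (solution of ∂/∂s F = F·T(s), F(t,t)=I). Then all entries of F(t,s) are nonnegative for s ≥ t. -/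
open Matrix

/-- The product integral of a continuous sub-intensity matrix function has
nonnegative entries for s ≥ t. -/
theorem product_integral_nonneg (n : ℕ) (T : ℝ → Matrix (Fin n) (Fin n) ℝ)
    (hTc : Continuous T)
    (hoff : ∀ x : ℝ, ∀ i j : Fin n, i ≠ j → 0 ≤ T x i j)
    (hrow : ∀ x : ℝ, ∀ i : Fin n, ∑ j, T x i j ≤ 0)
    (F : ℝ → ℝ → Matrix (Fin n) (Fin n) ℝ)
    (hinit : ∀ t : ℝ, F t t = 1)
    (hode : ∀ t s : ℝ, ∀ i j : Fin n,
      HasDerivAt (fun u => F t u i j) ((F t s * T s) i j) s) :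
    ∀ t s : ℝ, t ≤ s → ∀ i j : Fin n, 0 ≤ F t s i j := by
  intro t s hts i j
  -- entry-wise continuity of T
  have hTe : ∀ a b : Fin n, Continuous fun u => T u a b := fun a b =>
    (continuous_apply b).comp ((continuous_apply a).comp hTc)
  -- a bound on entries of T on [t, s]
  obtain ⟨x₀, -, hx₀⟩ := (isCompact_Icc (a := t) (b := s)).exists_isMaxOn
    (f := fun u : ℝ => ∑ p : Fin n × Fin n, |T u p.1 p.2|)
    (Set.nonempty_Icc.2 hts)
    (Continuous.continuousOn
      (continuous_finset_sum _ fun p _ => (hTe p.1 p.2).abs))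
  set c : ℝ := max (∑ p : Fin n × Fin n, |T x₀ p.1 p.2|) 0 with hc
  have hc0 : 0 ≤ c := le_max_right _ _
  have hTb : ∀ u ∈ Set.Icc t s, ∀ a b : Fin n, |T u a b| ≤ c := by
    intro u hu a b
    refine le_trans ?_ (le_trans (hx₀ hu) (le_max_left _ _))
    exact Finset.single_le_sum (f := fun p : Fin n × Fin n => |T u p.1 p.2|)
      (fun p _ => abs_nonneg _) (Finset.mem_univ (a, b))
  -- the shifted matrix A = T + c • 1
  set A : ℝ → Matrix (Fin n) (Fin n) ℝ := fun u => T u + c • (1 : Matrix (Fin n) (Fin n) ℝ)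
    with hA
  have hAe : ∀ a b : Fin n, Continuous fun u => A u a b := by
    intro a b
    show Continuous fun u => T u a b + (c • (1 : Matrix (Fin n) (Fin n) ℝ)) a b
    exact (hTe a b).add continuous_const
  have hA0 : ∀ u ∈ Set.Icc t s, ∀ a b : Fin n, 0 ≤ A u a b := by
    intro u hu a b
    by_cases hab : a = b
    · subst hab
      have := hTb u hu a a
      simp only [hA, Matrix.add_apply, Matrix.smul_apply, Matrix.one_apply_eq, smul_eq_mul,
        mul_one]
      cases' abs_le.1 this with h1 h2
      linarith
    · have := hoff u a b hab
      simp only [hA, Matrix.add_apply, Matrix.smul_apply, Matrix.one_apply_ne hab, smul_eq_mul,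
        mul_zero, add_zero]
      exact this
  set C : ℝ := (n + 1 : ℝ) * c with hC
  have hC0 : 0 ≤ C := by positivity
  have hAsum : ∀ u ∈ Set.Icc t s, ∀ b : Fin n, ∑ k, A u k b ≤ C := by
    intro u hu b
    have h1 : ∑ k, A u k b = (∑ k, T u k b) + c := by
      simp only [hA, Matrix.add_apply, Matrix.smul_apply, smul_eq_mul, Finset.sum_add_distrib]
      congr 1
      simp [Matrix.one_apply, mul_ite, Finset.sum_ite_eq', mul_comm]
    have h2 : ∑ k, T u k b ≤ (n : ℝ) * c := by
      calc ∑ k, T u k b ≤ ∑ _k : Fin n, c :=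
            Finset.sum_le_sum fun k _ => (abs_le.1 (hTb u hu k b)).2
        _ = (n : ℝ) * c := by simp [mul_comm]
      
    rw [h1, hC]
    push_cast
    linarith
  -- the rescaled solution g
  set g : ℝ → Fin n → Fin n → ℝ := fun u a b => Real.exp (c * (u - t)) * F t u a b with hg
  have hgd : ∀ (u : ℝ) (a b : Fin n),
      HasDerivAt (fun v => g v a b) (∑ k, g u a k * A u k b) u := by
    intro u a b
    have he : HasDerivAt (fun v : ℝ => Real.exp (c * (v - t)))
        (Real.exp (c * (u - t)) * c) u := by
      have : HasDerivAt (fun v : ℝ => c * (v - t)) c u := by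
        simpa using (((hasDerivAt_id u).sub_const t).const_mul c)
      simpa [mul_comm] using this.exp
    have := he.mul (hode t u a b)
    refine this.congr_deriv ?_
    have hsum : ∑ k, g u a k * A u k b
        = Real.exp (c * (u - t)) * ((F t u * T u) a b) +
          Real.exp (c * (u - t)) * c * F t u a b := by
      simp only [hg, hA, Matrix.add_apply, Matrix.smul_apply, smul_eq_mul, Matrix.mul_apply,
        Finset.mul_sum]
      have : ∀ k : Fin n, Real.exp (c * (u - t)) * F t u a k * (T u k b
          + c * (1 : Matrix (Fin n) (Fin n) ℝ) k b)
          = Real.exp (c * (u - t)) * (F t u a k * T u k b)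
            + Real.exp (c * (u - t)) * F t u a k * (c * (1 : Matrix (Fin n) (Fin n) ℝ) k b) := by
        intro k; ring
      rw [Finset.sum_congr rfl fun k _ => this k, Finset.sum_add_distrib]
      congr 1
      simp [Matrix.one_apply, Finset.sum_ite_eq']
      ring
    rw [hsum]; ring
  have hgc : ∀ a b : Fin n, Continuous fun u => g u a b := fun a b =>
    continuous_iff_continuousAt.2 fun u => (hgd u a b).continuousAt
  -- the total negative part N
  set N : ℝ → ℝ := fun u => ∑ p : Fin n × Fin n, max (-(g u p.1 p.2)) 0 with hN
  have hNc : Continuous N :=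
    continuous_finset_sum _ fun p _ => ((hgc p.1 p.2).neg.max continuous_const)
  have hN0 : ∀ u, 0 ≤ N u := fun u =>
    Finset.sum_nonneg fun p _ => le_max_right _ _
  have hNge : ∀ (u : ℝ) (a b : Fin n), -(g u a b) ≤ N u := by
    intro u a b
    refine le_trans (le_max_left _ 0) ?_
    exact Finset.single_le_sum (f := fun p : Fin n × Fin n => max (-(g u p.1 p.2)) 0)
      (fun p _ => le_max_right _ _) (Finset.mem_univ (a, b))
  -- derivative lower bound
  have hDb : ∀ u ∈ Set.Icc t s, ∀ a b : Fin n,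
      -(∑ k, g u a k * A u k b) ≤ C * N u := by
    intro u hu a b
    rw [← Finset.sum_neg_distrib]
    calc ∑ k, -(g u a k * A u k b) ≤ ∑ k, N u * A u k b := by
          refine Finset.sum_le_sum fun k _ => ?_
          rw [neg_mul_eq_neg_mul]
          exact mul_le_mul_of_nonneg_right (hNge u a k) (hA0 u hu k b)
      _ = N u * ∑ k, A u k b := by rw [Finset.mul_sum]
      _ ≤ N u * C := mul_le_mul_of_nonneg_left (hAsum u hu b) (hN0 u)
      _ = C * N u := mul_comm _ _
  -- the integrand of the ODE
  set D : Fin n → Fin n → ℝ → ℝ := fun a b u => ∑ k, g u a k * A u k b with hD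
  have hDc : ∀ a b : Fin n, Continuous (D a b) := fun a b =>
    continuous_finset_sum _ fun k _ => (hgc a k).mul (hAe k b)
  -- Φ, the running integral of N
  set Φ : ℝ → ℝ := fun u => ∫ v in t..u, N v with hΦ
  have hΦd : ∀ u : ℝ, HasDerivAt Φ (N u) u := fun u =>
    intervalIntegral.integral_hasDerivAt_right (hNc.intervalIntegrable t u)
      (hNc.stronglyMeasurableAtFilter _ _) hNc.continuousAt
  have hΦ0 : ∀ u, t ≤ u → 0 ≤ Φ u := fun u hu =>
    intervalIntegral.integral_nonneg hu fun v _ => hN0 v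
  set K : ℝ := (n * n : ℝ) * C with hK
  -- key integral inequality
  have hkey : ∀ u ∈ Set.Icc t s, N u ≤ K * Φ u := by
    intro u hu
    have hng : ∀ a b : Fin n, max (-(g u a b)) 0 ≤ C * Φ u := by
      intro a b
      have hftc : ∫ v in t..u, D a b v = g u a b - g t a b :=
        intervalIntegral.integral_eq_sub_of_hasDerivAt
          (fun v _ => hgd v a b) ((hDc a b).intervalIntegrable t u)
      have hgt : 0 ≤ g t a b := by
        by_cases h : a = b <;> simp [hg, hinit t, Matrix.one_apply, h]
      have hCΦ : ∫ v in t..u, C * N v = C * Φ u := by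
        rw [hΦ, intervalIntegral.integral_const_mul]
      have hCΦ0 : 0 ≤ C * Φ u := mul_nonneg hC0 (hΦ0 u hu.1)
      have hm : ∫ v in t..u, (-(D a b v)) ≤ ∫ v in t..u, C * N v := by
        apply intervalIntegral.integral_mono_on hu.1
          ((hDc a b).neg.intervalIntegrable t u)
          ((continuous_const.mul hNc).intervalIntegrable t u)
        intro v hv
        exact hDb v ⟨hv.1, le_trans hv.2 hu.2⟩ a b
      have heq : -(g u a b) = -(g t a b) + ∫ v in t..u, (-(D a b v)) := by
        rw [intervalIntegral.integral_neg, hftc]; ring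
      have h1 : -(g u a b) ≤ C * Φ u := by
        rw [heq, ← hCΦ]; linarith
      exact max_le h1 hCΦ0
    calc N u ≤ ∑ _p : Fin n × Fin n, C * Φ u :=
          Finset.sum_le_sum fun p _ => hng p.1 p.2
      _ = (n * n : ℝ) * (C * Φ u) := by
          simp [Finset.sum_const, Finset.card_univ]
      _ = K * Φ u := by rw [hK]; ring
  -- Grönwall: Φ ≤ 0 on [t, s]
  have hG := norm_le_gronwallBound_of_norm_deriv_right_le (f := Φ) (f' := N)
    (δ := 0) (K := K) (ε := 0) (a := t) (b := s)
    (Continuous.continuousOn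
      (continuous_iff_continuousAt.2 fun u => (hΦd u).continuousAt))
    (fun x _ => (hΦd x).hasDerivWithinAt)
    (by simp [hΦ])
    (fun x hx => by
      rw [Real.norm_of_nonneg (hN0 x), Real.norm_of_nonneg (hΦ0 x hx.1)]
      simpa using hkey x ⟨hx.1, le_of_lt hx.2⟩)
  have hΦs : Φ s = 0 := by
    have h := hG s (Set.right_mem_Icc.2 hts)
    rw [gronwallBound_ε0_δ0] at h
    exact norm_le_zero_iff.1 h
  have hNs : N s ≤ 0 := by
    have h := hkey s ⟨hts, le_refl s⟩
    rw [hΦs] at h; simpa using h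
  have hgs : 0 ≤ g s i j := by
    have := hNge s i j; linarith
  have hexp : 0 < Real.exp (c * (s - t)) := Real.exp_pos _
  have : g s i j = Real.exp (c * (s - t)) * F t s i j := rfl
  nlinarith [hgs, hexp]
end

section
/- Let T : ℝ → Matrix (Fin n) (Fin n) ℝ be continuous with each T(x) a sub-intensity matrix, and let F(t,s) be the product integral of T. Then for all s ≥ t and every row i, the row sums of F(t,s) are at most 1, i.e. (F(t,s) · 1)_i ≤ 1, where 1 is the all-ones column vector; moreover they are nonnegative. -/
open Matrix Filter Set

attribute [local instance] Matrix.seminormedAddCommGroup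

/-- Entrywise nonnegativity of the product integral of a matrix family with
nonnegative off-diagonal entries. -/
lemma product_integral_entry_nonneg (n : ℕ) (T : ℝ → Matrix (Fin n) (Fin n) ℝ)
    (hTc : Continuous T)
    (hoff : ∀ x : ℝ, ∀ i j : Fin n, i ≠ j → 0 ≤ T x i j)
    (F : ℝ → ℝ → Matrix (Fin n) (Fin n) ℝ)
    (hinit : ∀ t : ℝ, F t t = 1)
    (hode : ∀ t s : ℝ, ∀ i j : Fin n,
      HasDerivAt (fun u => F t u i j) ((F t s * T s) i j) s) :
    ∀ t s : ℝ, t ≤ s → ∀ i j : Fin n, 0 ≤ F t s i j := by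
  intro t s hts i j
  -- bound on T on [t, s]
  obtain ⟨C, hC⟩ := (isCompact_Icc : IsCompact (Icc t s)).exists_bound_of_continuousOn
    hTc.continuousOn
  have hC0 : 0 ≤ C := le_trans (norm_nonneg _) (hC t (left_mem_Icc.2 hts))
  have hTb : ∀ u ∈ Icc t s, ∀ k l : Fin n, |T u k l| ≤ C := by
    intro u hu k l
    rw [← Real.norm_eq_abs]
    exact le_trans (Matrix.norm_entry_le_entrywise_sup_norm _) (hC u hu)
  set K : ℝ := 2 * n * C + 1 with hKdef
  -- continuity of entries of F t ·
  have hFc : ∀ k l : Fin n, Continuous (fun u => F t u k l) := fun k l =>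
    continuous_iff_continuousAt.2 fun u => (hode t u k l).continuousAt
  set e : ℝ → ℝ := fun u => Real.exp (C * (u - t)) with hedef
  have hepos : ∀ u, 0 < e u := fun u => Real.exp_pos _
  have hecont : Continuous e :=
    Real.continuous_exp.comp (continuous_const.mul (continuous_id.sub continuous_const))
  have hEpos : ∀ u : ℝ, 0 < Real.exp (K * (u - t)) := fun u => Real.exp_pos _
  -- the main claim with an epsilon perturbation
  have main : ∀ ε : ℝ, 0 < ε → ∀ u ∈ Icc t s, ∀ k l : Fin n,
      0 < e u * F t u k l + ε * Real.exp (K * (u - t)) := by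
    intro ε hε
    set H : Fin n → Fin n → ℝ → ℝ :=
      fun k l u => e u * F t u k l + ε * Real.exp (K * (u - t)) with hHdef
    have hHcont : ∀ k l : Fin n, Continuous (H k l) := fun k l =>
      (hecont.mul (hFc k l)).add (continuous_const.mul
        (Real.continuous_exp.comp (continuous_const.mul (continuous_id.sub continuous_const))))
    -- derivative of H
    have hHderiv : ∀ k l : Fin n, ∀ u : ℝ, HasDerivAt (H k l)
        (e u * ((F t u * T u) k l) + C * e u * F t u k l
          + ε * (K * Real.exp (K * (u - t)))) u := by
      intro k l u
      have h1 : HasDerivAt (fun u => C * (u - t)) C u := by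
        simpa using ((hasDerivAt_id u).sub_const t).const_mul C
      have he' : HasDerivAt e (e u * C) u := h1.exp
      have h2 : HasDerivAt (fun u => e u * F t u k l)
          (e u * C * F t u k l + e u * ((F t u * T u) k l)) u :=
        he'.mul (hode t u k l)
      have h3 : HasDerivAt (fun u => K * (u - t)) K u := by
        simpa using ((hasDerivAt_id u).sub_const t).const_mul K
      have h4 : HasDerivAt (fun u => ε * Real.exp (K * (u - t)))
          (ε * (Real.exp (K * (u - t)) * K)) u := (h3.exp).const_mul ε
      have := h2.fun_add h4
      exact this.congr_deriv (by ring)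
    -- H is positive at u = t
    have hHt : ∀ k l : Fin n, 0 < H k l t := by
      intro k l
      have h1 : e t = 1 := by simp [hedef]
      have h2 : F t t k l = if k = l then 1 else 0 := by
        rw [hinit t]; simp [Matrix.one_apply]
      simp only [hHdef, h1, h2, one_mul, sub_self, mul_zero, Real.exp_zero, mul_one]
      by_cases h : k = l <;> simp [h] <;> linarith
    by_contra hcon
    push_neg at hcon
    obtain ⟨u₀, hu₀, k₀, l₀, hH₀⟩ := hcon
    -- bad set
    set Z : Set ℝ := {u | u ∈ Icc t s ∧ ∃ k l : Fin n, H k l u ≤ 0} with hZdef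
    have hZne : Z.Nonempty := ⟨u₀, hu₀, k₀, l₀, hH₀⟩
    have hZclosed : IsClosed Z := by
      have : Z = Icc t s ∩ ⋃ (k : Fin n) (l : Fin n), {u | H k l u ≤ 0} := by
        ext u; simp [hZdef, Set.mem_iUnion]
      rw [this]
      exact isClosed_Icc.inter (isClosed_iUnion_of_finite fun k =>
        isClosed_iUnion_of_finite fun l => isClosed_le (hHcont k l) continuous_const)
    have hZbdd : BddBelow Z := ⟨t, fun u hu => hu.1.1⟩
    set τ : ℝ := sInf Z with hτdef
    have hτZ : τ ∈ Z := hZclosed.csInf_mem hZne hZbdd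
    obtain ⟨⟨hτ1, hτ2⟩, k, l, hHτ⟩ := hτZ
    have htτ : t < τ := by
      rcases lt_or_eq_of_le hτ1 with h | h
      · exact h
      · exfalso; rw [← h] at hHτ; exact absurd hHτ (not_le.2 (hHt k l))
    -- strictly before τ, all H are positive
    have hbefore : ∀ u ∈ Ico t τ, ∀ k' l' : Fin n, 0 < H k' l' u := by
      intro u hu k' l'
      by_contra hc
      push_neg at hc
      have huZ : u ∈ Z := ⟨⟨hu.1, le_trans (le_of_lt hu.2) hτ2⟩, k', l', hc⟩
      exact absurd (csInf_le hZbdd huZ) (not_le.2 hu.2)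
    -- at τ, all H are nonnegative (left limit)
    have hatτ : ∀ k' l' : Fin n, 0 ≤ H k' l' τ := by
      intro k' l'
      have htend : Tendsto (H k' l') (nhdsWithin τ (Iio τ)) (nhds (H k' l' τ)) :=
        ((hHcont k' l').continuousAt).continuousWithinAt.tendsto
      have hev : ∀ᶠ u in nhdsWithin τ (Iio τ), 0 ≤ H k' l' u := by
        filter_upwards [Ico_mem_nhdsLT_of_mem (Set.mem_Ioc.2 ⟨htτ, le_refl τ⟩)] with u hu
        exact le_of_lt (hbefore u hu k' l')
      exact ge_of_tendsto htend hev
    -- lower bounds on e τ * F entries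
    set E : ℝ := Real.exp (K * (τ - t)) with hEdef
    have hE0 : 0 < E := Real.exp_pos _
    have hGlow : ∀ m : Fin n, -(ε * E) ≤ e τ * F t τ k m := by
      intro m
      have h := hatτ k m
      have h2 : H k m τ = e τ * F t τ k m + ε * Real.exp (K * (τ - t)) := rfl
      rw [h2] at h
      rw [hEdef]
      linarith
    -- the matrix A = T τ + C • 1 has entries in [0, 2C]
    have hτIcc : τ ∈ Icc t s := ⟨hτ1, hτ2⟩
    have hA0 : ∀ m : Fin n, 0 ≤ T τ m l + (if m = l then C else 0) := by
      intro m
      by_cases h : m = l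
      · rw [if_pos h, h]
        have h2 := (abs_le.1 (hTb τ hτIcc l l)).1
        linarith
      · rw [if_neg h]
        simpa using hoff τ m l h
    have hA2C : ∀ m : Fin n, T τ m l + (if m = l then C else 0) ≤ 2 * C := by
      intro m
      have h2 := (abs_le.1 (hTb τ hτIcc m l)).2
      by_cases h : m = l
      · rw [if_pos h]; linarith
      · rw [if_neg h]; linarith
    -- derivative of H k l at τ is positive
    have hderivpos : 0 < e τ * ((F t τ * T τ) k l) + C * e τ * F t τ k l
        + ε * (K * Real.exp (K * (τ - t))) := by
      have hsum : e τ * ((F t τ * T τ) k l) + C * e τ * F t τ k l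
          = ∑ m : Fin n, (e τ * F t τ k m) * (T τ m l + (if m = l then C else 0)) := by
        rw [Matrix.mul_apply]
        simp only [mul_add, Finset.sum_add_distrib, mul_ite, mul_zero]
        rw [Finset.sum_ite_eq' Finset.univ l (fun m => e τ * F t τ k m * C)]
        simp [Finset.mul_sum]
        congr 1
        · exact Finset.sum_congr rfl fun m _ => by ring
        · ring
      have hterm : ∀ m : Fin n,
          -(ε * E) * (2 * C) ≤ (e τ * F t τ k m) * (T τ m l + (if m = l then C else 0)) := by
        intro m
        have h1 : -(ε * E) * (T τ m l + (if m = l then C else 0))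
            ≤ (e τ * F t τ k m) * (T τ m l + (if m = l then C else 0)) :=
          mul_le_mul_of_nonneg_right (hGlow m) (hA0 m)
        have h2 : -(ε * E) * (2 * C) ≤ -(ε * E) * (T τ m l + (if m = l then C else 0)) := by
          apply mul_le_mul_of_nonpos_left (hA2C m)
          have : 0 < ε * E := mul_pos hε hE0
          linarith
        linarith
      have hsumlow : (n : ℝ) * (-(ε * E) * (2 * C))
          ≤ ∑ m : Fin n, (e τ * F t τ k m) * (T τ m l + (if m = l then C else 0)) := by
        calc (n : ℝ) * (-(ε * E) * (2 * C))
            = ∑ _m : Fin n, -(ε * E) * (2 * C) := by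
              rw [Finset.sum_const, Finset.card_univ, Fintype.card_fin]; ring
          _ ≤ _ := Finset.sum_le_sum fun m _ => hterm m
      rw [hsum]
      have hKE : ε * (K * Real.exp (K * (τ - t))) = ε * E * K := by
        rw [hEdef]; ring
      have : 0 < (n : ℝ) * (-(ε * E) * (2 * C)) + ε * E * K := by
        have hεE : 0 < ε * E := mul_pos hε hE0
        have : (n : ℝ) * (-(ε * E) * (2 * C)) + ε * E * K = ε * E * (K - 2 * n * C) := by ring
        rw [this, hKdef]
        have : K - 2 * (n : ℝ) * C = 1 := by rw [hKdef]; ring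
        nlinarith
      linarith [hsumlow]
    -- contradiction via slope from the left
    have hslope := hasDerivAt_iff_tendsto_slope.1 (hHderiv k l τ)
    have hslope' : Tendsto (slope (H k l) τ) (nhdsWithin τ (Iio τ))
        (nhds (e τ * ((F t τ * T τ) k l) + C * e τ * F t τ k l
          + ε * (K * Real.exp (K * (τ - t))))) :=
      hslope.mono_left (nhdsWithin_mono τ (fun x hx => ne_of_lt hx))
    have hev1 : ∀ᶠ u in nhdsWithin τ (Iio τ), 0 < slope (H k l) τ u :=
      hslope'.eventually (eventually_gt_nhds hderivpos)
    have hev2 : ∀ᶠ u in nhdsWithin τ (Iio τ), u ∈ Ico t τ :=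
      Ico_mem_nhdsLT_of_mem (Set.mem_Ioc.2 ⟨htτ, le_refl τ⟩)
    obtain ⟨u, hu1, hu2⟩ := (hev1.and hev2).exists
    have hneg : slope (H k l) τ u < 0 := by
      rw [slope_def_field]
      have h1 : 0 < H k l u := hbefore u hu2 k l
      have h2 : H k l u - H k l τ > 0 := by linarith
      have h3 : u - τ < 0 := by linarith [hu2.2]
      exact div_neg_of_pos_of_neg h2 h3
    linarith
  -- let ε → 0
  have hs : s ∈ Icc t s := right_mem_Icc.2 hts
  have h1 : 0 ≤ e s * F t s i j := by
    by_contra h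
    push_neg at h
    set δ : ℝ := -(e s * F t s i j) with hδ
    have hδpos : 0 < δ := by simp [hδ]; linarith
    have hεpos : 0 < δ / (2 * Real.exp (K * (s - t))) := by positivity
    have := main _ hεpos s hs i j
    rw [div_mul_eq_mul_div, mul_div_assoc] at this
    have hEx : Real.exp (K * (s - t)) / (2 * Real.exp (K * (s - t))) = 1 / 2 := by
      field_simp
    rw [hEx] at this
    simp [hδ] at this
    linarith
  nlinarith [hepos s, h1, mul_pos (hepos s) (hepos s)]

/-- For the product integral of a continuous sub-intensity matrix function,
each row sum lies in [0, 1] for s ≥ t. -/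
theorem product_integral_rowsum_le_one (n : ℕ) (T : ℝ → Matrix (Fin n) (Fin n) ℝ)
    (hTc : Continuous T)
    (hoff : ∀ x : ℝ, ∀ i j : Fin n, i ≠ j → 0 ≤ T x i j)
    (hrow : ∀ x : ℝ, ∀ i : Fin n, ∑ j, T x i j ≤ 0)
    (F : ℝ → ℝ → Matrix (Fin n) (Fin n) ℝ)
    (hinit : ∀ t : ℝ, F t t = 1)
    (hode : ∀ t s : ℝ, ∀ i j : Fin n,
      HasDerivAt (fun u => F t u i j) ((F t s * T s) i j) s) :
    ∀ t s : ℝ, t ≤ s → ∀ i : Fin n,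
      (F t s *ᵥ fun _ => (1 : ℝ)) i ≤ 1 ∧ 0 ≤ (F t s *ᵥ fun _ => (1 : ℝ)) i := by
  have hnonneg := product_integral_entry_nonneg n T hTc hoff F hinit hode
  intro t s hts i
  have hmv : ∀ u : ℝ, (F t u *ᵥ fun _ => (1 : ℝ)) i = ∑ j, F t u i j := by
    intro u
    simp [Matrix.mulVec, dotProduct]
  constructor
  · rw [hmv]
    -- g is antitone on [t, ∞)
    set g : ℝ → ℝ := fun u => ∑ j, F t u i j with hg
    have hgderiv : ∀ u : ℝ, HasDerivAt g (∑ j, (F t u * T u) i j) u :=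
      fun u => HasDerivAt.fun_sum (fun j _ => hode t u i j)
    have hgd_nonpos : ∀ u : ℝ, t ≤ u → (∑ j, (F t u * T u) i j) ≤ 0 := by
      intro u htu
      have : (∑ j, (F t u * T u) i j) = ∑ k, F t u i k * (∑ j, T u k j) := by
        simp only [Matrix.mul_apply]
        rw [Finset.sum_comm]
        simp [Finset.mul_sum]
      rw [this]
      apply Finset.sum_nonpos
      intro k _
      exact mul_nonpos_of_nonneg_of_nonpos (hnonneg t u htu i k) (hrow u k)
    have hanti : AntitoneOn g (Ici t) := by
      apply antitoneOn_of_deriv_nonpos (convex_Ici t)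
      · exact (continuous_iff_continuousAt.2 fun u => (hgderiv u).continuousAt).continuousOn
      · intro u _
        exact (hgderiv u).differentiableAt.differentiableWithinAt
      · intro u hu
        rw [(hgderiv u).deriv]
        rw [interior_Ici] at hu
        exact hgd_nonpos u (le_of_lt hu)
    have h1 : g s ≤ g t := hanti (Set.mem_Ici.2 le_rfl) hts hts
    have h2 : g t = 1 := by
      simp only [hg, hinit t]
      simp [Matrix.one_apply]
    calc (∑ j, F t s i j) = g s := rfl
      _ ≤ g t := h1
      _ = 1 := by rw [h2]
  · rw [hmv]
    exact Finset.sum_nonneg fun j _ => hnonneg t s hts i j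
end

section
/- Let M : ℝ → Matrix (Fin n) (Fin n) ℝ be continuous with each M(x) a proper intensity matrix (off-diagonal entries nonnegative, row sums zero), and let P(t,s) be the product integral of M. Then P(t,s) is a stochastic matrix for all s ≥ t: all entries nonnegative and each row sums to exactly 1. -/
open Matrix Filter Set Topology

/-- The product integral of a continuous (proper) intensity matrix function is a
stochastic matrix for s ≥ t: nonnegative entries and row sums exactly 1. -/
theorem product_integral_stochastic (n : ℕ) (M : ℝ → Matrix (Fin n) (Fin n) ℝ)
    (hMc : Continuous M)
    (hoff : ∀ x : ℝ, ∀ i j : Fin n, i ≠ j → 0 ≤ M x i j)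
    (hrow : ∀ x : ℝ, ∀ i : Fin n, ∑ j, M x i j = 0)
    (P : ℝ → ℝ → Matrix (Fin n) (Fin n) ℝ)
    (hinit : ∀ t : ℝ, P t t = 1)
    (hode : ∀ t s : ℝ, ∀ i j : Fin n,
      HasDerivAt (fun u => P t u i j) ((P t s * M s) i j) s) :
    ∀ t s : ℝ, t ≤ s → (∀ i j : Fin n, 0 ≤ P t s i j) ∧ ∀ i : Fin n, ∑ j, P t s i j = 1 := by
  intro t s0 hts
  -- continuity of entries of P t ·
  have hPcont : ∀ i j : Fin n, Continuous fun u => P t u i j := fun i j =>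
    continuous_iff_continuousAt.2 fun u => (hode t u i j).continuousAt
  -- bound on M over [t, s0]
  have hMentry : ∀ k j : Fin n, Continuous fun u => M u k j := by
    intro k j
    exact (continuous_apply j).comp ((continuous_apply k).comp hMc)
  set F : ℝ → ℝ := fun u => ∑ k, ∑ j, |M u k j| with hF
  have hFc : Continuous F := by
    apply continuous_finset_sum
    intro k _
    exact continuous_finset_sum _ fun j _ => (hMentry k j).abs
  obtain ⟨C, hC⟩ := (isCompact_Icc (a := t) (b := s0)).exists_bound_of_continuousOn
    hFc.continuousOn
  have hFnonneg : ∀ u, 0 ≤ F u := by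
    intro u
    exact Finset.sum_nonneg fun k _ => Finset.sum_nonneg fun j _ => abs_nonneg _
  have hFC : ∀ u ∈ Icc t s0, F u ≤ C := by
    intro u hu
    have := hC u hu
    rw [Real.norm_eq_abs, abs_of_nonneg (hFnonneg u)] at this
    exact this
  have hC0 : 0 ≤ C := le_trans (hFnonneg t) (hFC t ⟨le_refl t, hts⟩)
  have habs : ∀ u ∈ Icc t s0, ∀ k j : Fin n, |M u k j| ≤ C := by
    intro u hu k j
    refine le_trans ?_ (hFC u hu)
    refine le_trans (Finset.single_le_sum (f := fun j => |M u k j|)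
      (fun j _ => abs_nonneg _) (Finset.mem_univ j)) ?_
    exact Finset.single_le_sum (f := fun k => ∑ j, |M u k j|)
      (fun k _ => Finset.sum_nonneg fun j _ => abs_nonneg _) (Finset.mem_univ k)
  have hcolsum : ∀ u ∈ Icc t s0, ∀ j : Fin n, ∑ k, M u k j ≤ C := by
    intro u hu j
    refine le_trans (Finset.sum_le_sum fun k _ => le_abs_self (M u k j)) ?_
    refine le_trans (Finset.sum_le_sum fun k _ => ?_) (hFC u hu)
    exact Finset.single_le_sum (f := fun j => |M u k j|) (fun j _ => abs_nonneg _)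
      (Finset.mem_univ j)
  set K : ℝ := 2 * C + 1 with hK
  -- key positivity claim
  have key : ∀ ε : ℝ, 0 < ε → ∀ u ∈ Icc t s0, ∀ i j : Fin n,
      0 < Real.exp (C * u) * P t u i j + ε * Real.exp (K * u) := by
    intro ε hε
    set f : Fin n → Fin n → ℝ → ℝ :=
      fun i j u => Real.exp (C * u) * P t u i j + ε * Real.exp (K * u) with hf
    show ∀ u ∈ Icc t s0, ∀ i j : Fin n, 0 < f i j u
    by_contra hcon
    push_neg at hcon
    obtain ⟨u0, hu0, i1, j1, hle1⟩ := hcon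
    have hfc : ∀ i j : Fin n, Continuous (f i j) := by
      intro i j
      exact ((Real.continuous_exp.comp (continuous_const.mul continuous_id)).mul
        (hPcont i j)).add (continuous_const.mul
        (Real.continuous_exp.comp (continuous_const.mul continuous_id)))
    set S : Set ℝ := {u | u ∈ Icc t s0 ∧ ∃ i j : Fin n, f i j u ≤ 0} with hS
    have hSclosed : IsClosed S := by
      have : S = Icc t s0 ∩ ⋃ i : Fin n, ⋃ j : Fin n, {u | f i j u ≤ 0} := by
        ext u; simp [hS, Set.mem_iUnion]
      rw [this]
      exact isClosed_Icc.inter (isClosed_iUnion_of_finite fun i =>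
        isClosed_iUnion_of_finite fun j => isClosed_le (hfc i j) continuous_const)
    have hSne : S.Nonempty := ⟨u0, hu0, i1, j1, hle1⟩
    have hSbdd : BddBelow S := ⟨t, fun x hx => hx.1.1⟩
    set u := sInf S with hu
    have huS : u ∈ S := hSclosed.csInf_mem hSne hSbdd
    have hut : t ≤ u := huS.1.1
    have hus0 : u ≤ s0 := huS.1.2
    have hftpos : ∀ i j : Fin n, 0 < f i j t := by
      intro i j
      have h1 : (0:ℝ) ≤ Real.exp (C * t) * P t t i j := by
        rw [hinit]
        by_cases h : i = j <;>
          simp [Matrix.one_apply, h, (Real.exp_pos _).le]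
      have h2 : 0 < ε * Real.exp (K * t) := mul_pos hε (Real.exp_pos _)
      simp only [hf]
      linarith
    have htu : t < u := by
      rcases lt_or_eq_of_le hut with h | h
      · exact h
      · exfalso
        obtain ⟨i, j, hij⟩ := huS.2
        rw [← h] at hij
        exact absurd hij (not_le.2 (hftpos i j))
    have hpre : ∀ v ∈ Ico t u, ∀ i j : Fin n, 0 < f i j v := by
      intro v hv i j
      by_contra hcv
      push_neg at hcv
      have hvS : v ∈ S := ⟨⟨hv.1, le_trans hv.2.le hus0⟩, i, j, hcv⟩
      exact absurd (csInf_le hSbdd hvS) (not_le.2 hv.2)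
    have hIoo_mem : Ioo t u ∈ 𝓝[<] u := Ioo_mem_nhdsLT htu
    have hfu0 : ∀ i j : Fin n, 0 ≤ f i j u := by
      intro i j
      have htend : Tendsto (f i j) (𝓝[<] u) (𝓝 (f i j u)) :=
        ((hfc i j).tendsto u).mono_left nhdsWithin_le_nhds
      refine ge_of_tendsto htend ?_
      filter_upwards [hIoo_mem] with v hv
      exact (hpre v ⟨hv.1.le, hv.2⟩ i j).le
    obtain ⟨i0, j0, h0⟩ := huS.2
    have hf0 : f i0 j0 u = 0 := le_antisymm h0 (hfu0 i0 j0)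
    -- derivative of f i0 j0 at u
    have e1 : HasDerivAt (fun v => Real.exp (C * v)) (Real.exp (C * u) * C) u := by
      have h := ((hasDerivAt_id u).const_mul C).exp
      simpa using h
    have e2 : HasDerivAt (fun v => Real.exp (K * v)) (Real.exp (K * u) * K) u := by
      have h := ((hasDerivAt_id u).const_mul K).exp
      simpa using h
    set D : ℝ := (Real.exp (C * u) * C) * P t u i0 j0 +
        Real.exp (C * u) * ((P t u * M u) i0 j0) + ε * (Real.exp (K * u) * K) with hD
    have hd : HasDerivAt (f i0 j0) D u := by
      have := (e1.fun_mul (hode t u i0 j0)).fun_add (e2.const_mul ε)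
      simpa [hf, hD] using this
    -- D ≤ 0 from left minimum
    have hDle : D ≤ 0 := by
      have hslope : Tendsto (slope (f i0 j0) u) (𝓝[<] u) (𝓝 D) :=
        (hasDerivAt_iff_tendsto_slope.1 hd).mono_left
          (nhdsWithin_mono u fun v hv => ne_of_lt hv)
      refine le_of_tendsto hslope ?_
      filter_upwards [hIoo_mem] with v hv
      have hfv : 0 < f i0 j0 v := hpre v ⟨hv.1.le, hv.2⟩ i0 j0
      rw [slope_def_field, hf0]
      have hvu : v - u < 0 := sub_neg.2 hv.2
      exact div_nonpos_of_nonneg_of_nonpos (by linarith) (by linarith)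
    -- D > 0 from the structure of the ODE
    have hDpos : 0 < D := by
      set a : Fin n → ℝ := fun k => M u k j0 + (if k = j0 then C else 0) with ha
      have ha_nonneg : ∀ k, 0 ≤ a k := by
        intro k
        by_cases h : k = j0
        · subst h
          have := habs u ⟨hut, hus0⟩ k k
          simp [ha]
          have := abs_le.1 this
          linarith [this.1]
        · simp [ha, h]
          exact hoff u k j0 h
      have hsum_a : ∑ k, a k ≤ 2 * C := by
        have h1 : ∑ k, a k = (∑ k, M u k j0) + C * (if j0 ∈ (Finset.univ : Finset (Fin n)) then 1 else 0) := by
          rw [ha]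
          rw [Finset.sum_add_distrib]
          congr 1
          simp [Finset.sum_ite_eq']
        rw [h1]
        simp
        have := hcolsum u ⟨hut, hus0⟩ j0
        linarith
      have hDrw : D = (∑ k, (Real.exp (C * u) * P t u i0 k) * a k) + ε * (Real.exp (K * u) * K) := by
        rw [hD, ha]
        congr 1
        rw [Matrix.mul_apply, Finset.mul_sum]
        have : ∀ k : Fin n, (Real.exp (C * u) * P t u i0 k) * (M u k j0 + (if k = j0 then C else 0))
            = Real.exp (C * u) * (P t u i0 k * M u k j0)
              + (if k = j0 then (Real.exp (C * u) * C) * P t u i0 k else 0) := by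
          intro k
          by_cases h : k = j0 <;> simp [h] <;> ring
        rw [Finset.sum_congr rfl fun k _ => this k, Finset.sum_add_distrib]
        simp [Finset.sum_ite_eq']
        ring
      have hterm : ∀ k : Fin n, (-(ε * Real.exp (K * u))) * a k ≤ (Real.exp (C * u) * P t u i0 k) * a k := by
        intro k
        apply mul_le_mul_of_nonneg_right _ (ha_nonneg k)
        have := hfu0 i0 k
        simp only [hf] at this
        linarith
      have hsum_ge : (-(ε * Real.exp (K * u))) * (2 * C) ≤ ∑ k, (Real.exp (C * u) * P t u i0 k) * a k := by
        calc (-(ε * Real.exp (K * u))) * (2 * C)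
            ≤ (-(ε * Real.exp (K * u))) * ∑ k, a k := by
              apply mul_le_mul_of_nonpos_left hsum_a
              simp
              positivity
          _ = ∑ k, (-(ε * Real.exp (K * u))) * a k := by rw [Finset.mul_sum]
          _ ≤ _ := Finset.sum_le_sum fun k _ => hterm k
      rw [hDrw]
      have hEK : 0 < Real.exp (K * u) := Real.exp_pos _
      have : ε * (Real.exp (K * u) * K) = ε * Real.exp (K * u) * (2 * C) + ε * Real.exp (K * u) := by
        rw [hK]; ring
      nlinarith [mul_pos hε hEK]
    linarith
  -- nonnegativity
  have hnonneg : ∀ i j : Fin n, 0 ≤ P t s0 i j := by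
    intro i j
    have h1 : 0 ≤ Real.exp (C * s0) * P t s0 i j := by
      refine le_of_forall_pos_le_add ?_
      intro δ hδ
      have hε : 0 < δ / Real.exp (K * s0) := div_pos hδ (Real.exp_pos _)
      have := key _ hε s0 ⟨hts, le_refl s0⟩ i j
      rw [div_mul_cancel₀] at this
      · linarith
      · exact (Real.exp_pos _).ne'
    exact nonneg_of_mul_nonneg_right h1 (Real.exp_pos _)
  refine ⟨hnonneg, ?_⟩
  -- row sums
  intro i
  have hD : ∀ u : ℝ, HasDerivAt (fun v => ∑ j, P t v i j) 0 u := by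
    intro u
    have h := HasDerivAt.fun_sum (fun j (_ : j ∈ (Finset.univ : Finset (Fin n))) => hode t u i j)
    convert h using 1
    · rfl
    · rfl
    symm
    calc ∑ j, (P t u * M u) i j = ∑ j, ∑ k, P t u i k * M u k j := by
          simp [Matrix.mul_apply]
      _ = ∑ k, P t u i k * ∑ j, M u k j := by
          rw [Finset.sum_comm]; simp [Finset.mul_sum]
      _ = 0 := by simp [hrow]
  have hconst : (∑ j, P t s0 i j) = ∑ j, P t t i j :=
    is_const_of_deriv_eq_zero (fun u => (hD u).differentiableAt)
      (fun u => (hD u).deriv) s0 t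
  rw [hconst, hinit]
  simp [Matrix.one_apply]
end

section
/- Let τ be a random variable with survival function P(τ > x) = π · F(0,x) · 1 where π is a probability row vector on Fin n, F(t,s) is the product integral of a continuous sub-intensity matrix function T, and 1 is the all-ones vector. Then for s, t ≥ 0 with π·F(0,s)·1 > 0, the conditional survival function satisfies P(τ > s + t | τ > s) = α(s) · F(s, s+t) · 1, where α(s) = (π·F(0,s)) / (π·F(0,s)·1). In particular, the overshoot τ − s given τ > s has survival function x ↦ α(s)·F(s,s+x)·1, i.e. is again of inhomogeneous phase-type with representation (α(s), T(s+·)). -/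
open Matrix MeasureTheory ProbabilityTheory

open Set Real in
/-- Semigroup (product-integral) property of the solution of the linear matrix ODE. -/
theorem IPH_semigroup {n : ℕ}
    (T : ℝ → Matrix (Fin n) (Fin n) ℝ) (hTc : Continuous T)
    (F : ℝ → ℝ → Matrix (Fin n) (Fin n) ℝ)
    (hFinit : ∀ t : ℝ, F t t = 1)
    (hFode : ∀ t s : ℝ, ∀ i j : Fin n,
      HasDerivAt (fun u => F t u i j) ((F t s * T s) i j) s)
    (s b : ℝ) (hsb : s ≤ b) :
    F 0 b = F 0 s * F s b := by
  classical
  -- clamp time to [s, b]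
  set cl : ℝ → ℝ := fun u => max s (min u b) with hcl
  have hclmem : ∀ u, cl u ∈ Icc s b := by
    intro u
    refine ⟨le_max_left _ _, max_le hsb (min_le_right _ _)⟩
  have hcleq : ∀ u ∈ Icc s b, cl u = u := by
    intro u hu
    simp [hcl, min_eq_left hu.2, max_eq_right hu.1]
  -- bound on the entries of T on [s, b]
  have hφc : Continuous fun u => ∑ k, ∑ j, |T u k j| := by
    refine continuous_finset_sum _ fun k _ => continuous_finset_sum _ fun j _ => ?_
    exact (hTc.matrix_elem k j).abs
  obtain ⟨x₀, hx₀, hmax'⟩ := isCompact_Icc.exists_isMaxOn (nonempty_Icc.2 hsb)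
    hφc.continuousOn
  have hmax : ∀ u ∈ Icc s b, (∑ k, ∑ j, |T u k j|) ≤ ∑ k, ∑ j, |T x₀ k j| :=
    fun u hu => hmax' hu
  set C : ℝ := ∑ k, ∑ j, |T x₀ k j| with hCdef
  have hC0 : 0 ≤ C := Finset.sum_nonneg fun _ _ => Finset.sum_nonneg fun _ _ => abs_nonneg _
  have hCb : ∀ u ∈ Icc s b, ∀ k j : Fin n, |T u k j| ≤ C := by
    intro u hu k j
    refine le_trans ?_ (hmax u hu)
    calc |T u k j| ≤ ∑ j', |T u k j'| :=
          Finset.single_le_sum (f := fun j' => |T u k j'|) (fun _ _ => abs_nonneg _) (Finset.mem_univ j)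
      _ ≤ ∑ k', ∑ j', |T u k' j'| :=
          Finset.single_le_sum (f := fun k' => ∑ j', |T u k' j'|)
            (fun _ _ => Finset.sum_nonneg fun _ _ => abs_nonneg _) (Finset.mem_univ k)
  -- the vector field
  set E := Fin n → Fin n → ℝ
  set v : ℝ → E → E := fun u X => fun i j => ∑ k, X i k * T (cl u) k j with hv
  set K : NNReal := (n : NNReal) * C.toNNReal with hK
  have hKcoe : (K : ℝ) = n * C := by
    simp [hK, Real.coe_toNNReal _ hC0]
  have hlip : ∀ u, LipschitzWith K (v u) := by
    intro u
    refine LipschitzWith.of_dist_le_mul fun X Y => ?_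
    rw [hKcoe]
    have hd0 : (0 : ℝ) ≤ n * C * dist X Y :=
      mul_nonneg (mul_nonneg (Nat.cast_nonneg n) hC0) dist_nonneg
    rw [dist_pi_le_iff hd0]
    intro i
    rw [dist_pi_le_iff hd0]
    intro j
    have hXY : ∀ k, |X i k - Y i k| ≤ dist X Y := by
      intro k
      have h1 : dist (X i k) (Y i k) ≤ dist (X i) (Y i) := dist_le_pi_dist _ _ _
      have h2 : dist (X i) (Y i) ≤ dist X Y := dist_le_pi_dist _ _ _
      simpa [Real.dist_eq] using h1.trans h2
    have : v u X i j - v u Y i j = ∑ k, (X i k - Y i k) * T (cl u) k j := by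
      simp [hv, Finset.sum_sub_distrib, sub_mul]
    rw [Real.dist_eq, this]
    calc |∑ k, (X i k - Y i k) * T (cl u) k j|
        ≤ ∑ k, |(X i k - Y i k) * T (cl u) k j| := Finset.abs_sum_le_sum_abs _ _
      _ ≤ ∑ _k : Fin n, dist X Y * C := by
          refine Finset.sum_le_sum fun k _ => ?_
          rw [abs_mul]
          exact mul_le_mul (hXY k) (hCb _ (hclmem u) k j) (abs_nonneg _) dist_nonneg
      _ = n * C * dist X Y := by
          simp [Finset.sum_const]
          ring
  -- the two solutions
  set f : ℝ → E := fun u => fun i j => F 0 u i j with hfdef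
  set g : ℝ → E := fun u => fun i j => (F 0 s * F s u) i j with hgdef
  have hf' : ∀ u, HasDerivAt f (fun i j => (F 0 u * T u) i j) u := by
    intro u
    rw [hasDerivAt_pi]
    intro i
    rw [hasDerivAt_pi]
    intro j
    exact hFode 0 u i j
  have hg' : ∀ u, HasDerivAt g (fun i j => ((F 0 s * F s u) * T u) i j) u := by
    intro u
    rw [hasDerivAt_pi]
    intro i
    rw [hasDerivAt_pi]
    intro j
    have h1 : HasDerivAt (fun w => ∑ k, F 0 s i k * F s w k j)
        (∑ k, F 0 s i k * (F s u * T u) k j) u :=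
      HasDerivAt.fun_sum fun k _ => (hFode s u k j).const_mul (F 0 s i k)
    have h2 : (fun w => g w i j) = fun w => ∑ k, F 0 s i k * F s w k j := by
      funext w
      simp [hgdef, Matrix.mul_apply]
    have h3 : ((F 0 s * F s u) * T u) i j = ∑ k, F 0 s i k * (F s u * T u) k j := by
      rw [Matrix.mul_assoc, Matrix.mul_apply]
    rw [h2, h3]
    exact h1
  have hfc : Continuous f := by
    refine continuous_iff_continuousAt.2 fun u => ?_
    exact ((hf' u).differentiableAt).continuousAt
  have hgc : Continuous g := by
    refine continuous_iff_continuousAt.2 fun u => ?_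
    exact ((hg' u).differentiableAt).continuousAt
  have key : EqOn f g (Icc s b) := by
    refine ODE_solution_unique_of_mem_Icc_right (v := v) (s := fun _ => (univ : Set E))
      (fun t _ => (hlip t).lipschitzOnWith)
      hfc.continuousOn ?_ (fun _ _ => trivial) hgc.continuousOn ?_ (fun _ _ => trivial) ?_
    · intro u hu
      have := (hf' u).hasDerivWithinAt (s := Ici u)
      convert this using 1
      funext i j
      simp [hv, hcleq u (Ico_subset_Icc_self hu), hfdef, Matrix.mul_apply]
    · intro u hu
      have := (hg' u).hasDerivWithinAt (s := Ici u)
      convert this using 1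
      funext i j
      simp [hv, hcleq u (Ico_subset_Icc_self hu), hgdef, Matrix.mul_apply]
    · funext i j
      simp [hfdef, hgdef, hFinit s]
  have hb := key (right_mem_Icc.2 hsb)
  ext i j
  exact congrFun (congrFun hb i) j

/-- Overshoot property of inhomogeneous phase-type distributions: if τ has survival
function x ↦ π F(0,x) 1, then P(τ > s+t | τ > s) = α(s) F(s,s+t) 1 where
α(s) = π F(0,s) / (π F(0,s) 1); i.e. the overshoot is again IPH(α(s), T(s+·)). -/
theorem IPH_overshoot (n : ℕ) {Ω : Type*} [MeasureSpace Ω]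
    [IsProbabilityMeasure (ℙ : Measure Ω)]
    (τ : Ω → ℝ) (π : Fin n → ℝ) (hπ0 : ∀ i, 0 ≤ π i) (hπ1 : ∑ i, π i = 1)
    (T : ℝ → Matrix (Fin n) (Fin n) ℝ) (hTc : Continuous T)
    (hoff : ∀ x : ℝ, ∀ i j : Fin n, i ≠ j → 0 ≤ T x i j)
    (hrow : ∀ x : ℝ, ∀ i : Fin n, ∑ j, T x i j ≤ 0)
    (F : ℝ → ℝ → Matrix (Fin n) (Fin n) ℝ)
    (hFinit : ∀ t : ℝ, F t t = 1)
    (hFode : ∀ t s : ℝ, ∀ i j : Fin n,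
      HasDerivAt (fun u => F t u i j) ((F t s * T s) i j) s)
    (hsurv : ∀ x : ℝ, (ℙ {ω | x < τ ω}).toReal = π ⬝ᵥ (F 0 x *ᵥ fun _ => (1 : ℝ)))
    (s : ℝ) (hs : 0 ≤ s)
    (hpos : 0 < π ⬝ᵥ (F 0 s *ᵥ fun _ => (1 : ℝ))) :
    ∀ t : ℝ, 0 ≤ t →
      (ℙ {ω | s + t < τ ω}).toReal / (ℙ {ω | s < τ ω}).toReal
        = (fun i => (π ᵥ* F 0 s) i / (π ⬝ᵥ (F 0 s *ᵥ fun _ => (1 : ℝ))))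
            ⬝ᵥ (F s (s + t) *ᵥ fun _ => (1 : ℝ)) := by
  intro t ht
  have hsg : F 0 (s + t) = F 0 s * F s (s + t) :=
    IPH_semigroup T hTc F hFinit hFode s (s + t) (le_add_of_nonneg_right ht)
  rw [hsurv, hsurv, hsg, ← Matrix.mulVec_mulVec, Matrix.dotProduct_mulVec π (F 0 s)]
  simp only [dotProduct, div_mul_eq_mul_div, ← Finset.sum_div]
end

section
/- Let T : ℝ → Matrix (Fin n) (Fin n) ℝ be a continuous sub-intensity matrix function with exit rate vector t(x) = −T(x)·1, let π be a probability row vector, and let F be the product integral of T. Assume x ↦ π·F(0,x)·1 tends to 0 as x → ∞. Then the function f(x) = π · F(0,x) · t(x) is the density of the distribution with survival function x ↦ π·F(0,x)·1 on [0,∞); that is, ∫_0^y f(x) dx = 1 − π·F(0,y)·1 for all y ≥ 0. -/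
open Matrix

/-- The function f(x) = π F(0,x) t(x), with exit rate vector t(x) = -T(x)·1, is the
density of the IPH distribution with survival function x ↦ π F(0,x) 1:
∫_0^y f(x) dx = 1 - π F(0,y) 1 for y ≥ 0. -/
theorem IPH_density (n : ℕ) (T : ℝ → Matrix (Fin n) (Fin n) ℝ) (hTc : Continuous T)
    (hoff : ∀ x : ℝ, ∀ i j : Fin n, i ≠ j → 0 ≤ T x i j)
    (hrow : ∀ x : ℝ, ∀ i : Fin n, ∑ j, T x i j ≤ 0)
    (π : Fin n → ℝ) (hπ0 : ∀ i, 0 ≤ π i) (hπ1 : ∑ i, π i = 1)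
    (F : ℝ → ℝ → Matrix (Fin n) (Fin n) ℝ)
    (hFinit : ∀ t : ℝ, F t t = 1)
    (hFode : ∀ t s : ℝ, ∀ i j : Fin n,
      HasDerivAt (fun u => F t u i j) ((F t s * T s) i j) s)
    (htail : Filter.Tendsto (fun x => π ⬝ᵥ (F 0 x *ᵥ fun _ => (1 : ℝ)))
      Filter.atTop (nhds 0)) :
    ∀ y : ℝ, 0 ≤ y →
      (∫ x in (0 : ℝ)..y, π ⬝ᵥ (F 0 x *ᵥ ((-T x) *ᵥ fun _ => (1 : ℝ))))
        = 1 - π ⬝ᵥ (F 0 y *ᵥ fun _ => (1 : ℝ)) := by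
  intro y hy
  set g : ℝ → ℝ := fun x => π ⬝ᵥ (F 0 x *ᵥ fun _ => (1 : ℝ)) with hg
  have hFcont : ∀ i j : Fin n, Continuous (fun x => F 0 x i j) := fun i j =>
    continuous_iff_continuousAt.2 fun x => (hFode 0 x i j).continuousAt
  have hTcont : ∀ i j : Fin n, Continuous (fun x => T x i j) := fun i j =>
    (continuous_apply j).comp ((continuous_apply i).comp hTc)
  -- derivative of g
  have hgd : ∀ x : ℝ, HasDerivAt g (π ⬝ᵥ ((F 0 x * T x) *ᵥ fun _ => (1 : ℝ))) x := by
    intro x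
    have : HasDerivAt (fun u => ∑ i, π i * ∑ j, F 0 u i j)
        (∑ i, π i * ∑ j, (F 0 x * T x) i j) x := by
      apply HasDerivAt.fun_sum
      intro i _
      exact (HasDerivAt.fun_sum fun j _ => hFode 0 x i j).const_mul (π i)
    convert this using 1 <;>
      simp [g, dotProduct, Matrix.mulVec, Finset.mul_sum]
  -- integrand equals -(derivative of g)
  have hint : ∀ x : ℝ, π ⬝ᵥ (F 0 x *ᵥ ((-T x) *ᵥ fun _ => (1 : ℝ)))
      = -(π ⬝ᵥ ((F 0 x * T x) *ᵥ fun _ => (1 : ℝ))) := by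
    intro x
    rw [← Matrix.mulVec_mulVec]
    simp [Matrix.neg_mulVec, Matrix.mulVec_neg, dotProduct_neg]
  have hcont : Continuous fun x => π ⬝ᵥ ((F 0 x * T x) *ᵥ fun _ => (1 : ℝ)) := by
    simp only [dotProduct, Matrix.mulVec, Matrix.mul_apply]
    exact continuous_finset_sum _ fun i _ => continuous_const.mul <|
      continuous_finset_sum _ fun j _ => (continuous_finset_sum _ fun k _ =>
        (hFcont i k).mul (hTcont k j)).mul continuous_const
  have key : (∫ x in (0:ℝ)..y, π ⬝ᵥ ((F 0 x * T x) *ᵥ fun _ => (1 : ℝ)))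
      = g y - g 0 :=
    intervalIntegral.integral_eq_sub_of_hasDerivAt (fun x _ => hgd x)
      (hcont.intervalIntegrable 0 y)
  have hg0 : g 0 = 1 := by
    rw [hg]
    simp only [hFinit, Matrix.one_mulVec]
    simpa [dotProduct] using hπ1
  simp only [hint]
  rw [intervalIntegral.integral_neg, key, hg0]
  ring
end

section
/- Let M be an intensity matrix function on the product state space E with block structure, let F_M(t,s) be its product integral and F_{jj}(t,s) the product integral of the diagonal block M_{jj}. Define E_j as the |E| × d_j matrix embedding the j-th block (identity in block row j, zeros elsewhere). Then for t ≤ r ≤ s, the matrix-valued function G(t,s) := F_M(t,r) E_j F_{jj}(r,s) satisfies: all entries of G are nonnegative, and e'_{(i,ĩ)} G(t,s) e_{j̃} ≤ 1 for every microstate (i,ĩ) and every j̃ ∈ Fin d_j. -/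
open Matrix Finset


/-- Entries of the solution of F' = F A, F(t)=1, with A having nonneg off-diagonal
entries, are nonnegative for s ≥ t. -/
lemma entries_nonneg {n : Type*} [Fintype n] [DecidableEq n]
    (A : ℝ → Matrix n n ℝ) (hAc : ∀ i k : n, Continuous fun u => A u i k)
    (hoff : ∀ u : ℝ, ∀ i k : n, i ≠ k → 0 ≤ A u i k)
    (F : ℝ → Matrix n n ℝ) (t : ℝ) (hFt : F t = 1)
    (hF' : ∀ (u : ℝ) (i k : n), HasDerivAt (fun v => F v i k) ((F u * A u) i k) u)
    {s : ℝ} (hts : t ≤ s) (i k : n) : 0 ≤ F s i k := by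
  classical
  -- bound on entries of A on [t,s]
  set m : ℝ → ℝ := fun u => ∑ p : n × n, |A u p.1 p.2| with hm
  have hmc : Continuous m := by
    apply continuous_finset_sum
    intro p _
    exact (hAc p.1 p.2).abs
  obtain ⟨u₀, hu₀, hmax⟩ := isCompact_Icc.exists_isMaxOn (Set.nonempty_Icc.2 hts)
    hmc.continuousOn
  set c : ℝ := max (m u₀) 0 with hc
  have hc0 : 0 ≤ c := le_max_right _ _
  have hAbound : ∀ u ∈ Set.Icc t s, ∀ i k : n, |A u i k| ≤ c := by
    intro u hu i k
    have h1 : |A u i k| ≤ m u :=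
      Finset.single_le_sum (f := fun p : n × n => |A u p.1 p.2|)
        (fun p _ => abs_nonneg _) (mem_univ (i, k))
    exact h1.trans ((hmax hu).trans (le_max_left _ _))
  -- the perturbed matrix B = A + cI has nonneg entries on [t,s], bounded by 2c
  set B : ℝ → Matrix n n ℝ := fun u => A u + c • (1 : Matrix n n ℝ) with hB
  have hBnn : ∀ u ∈ Set.Icc t s, ∀ i k : n, 0 ≤ B u i k := by
    intro u hu i k
    by_cases h : i = k
    · subst h
      have := (abs_le.1 (hAbound u hu i i)).1
      simp [hB, Matrix.one_apply]
      linarith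
    · have := hoff u i k h
      simp [hB, Matrix.one_apply, h]
      linarith
  have hBle : ∀ u ∈ Set.Icc t s, ∀ i k : n, B u i k ≤ 2 * c := by
    intro u hu i k
    have := (abs_le.1 (hAbound u hu i k)).2
    by_cases h : i = k
    · subst h; simp [hB, Matrix.one_apply]; linarith
    · simp [hB, Matrix.one_apply, h]; linarith
  -- G u i k = exp(c(u-t)) F u i k satisfies G' = G B
  set G : ℝ → n → n → ℝ := fun u i k => Real.exp (c * (u - t)) * F u i k with hG
  have hGc : ∀ i k : n, Continuous fun u => G u i k := by
    intro i k
    exact (Real.continuous_exp.comp (continuous_const.mul (continuous_id.sub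
      continuous_const))).mul
      (continuous_iff_continuousAt.2 fun u => (hF' u i k).continuousAt)
  have hG' : ∀ (u : ℝ) (i k : n),
      HasDerivAt (fun v => G v i k) (∑ l, G u i l * B u l k) u := by
    intro u i k
    have h1 : HasDerivAt (fun v : ℝ => c * (v - t)) c u := by
      simpa using ((hasDerivAt_id u).sub_const t).const_mul c
    have h2 := (h1.exp.mul (hF' u i k))
    refine HasDerivAt.congr_deriv h2 ?_
    have : ∑ l, G u i l * B u l k
        = Real.exp (c * (u - t)) * (F u * A u) i k
          + c * Real.exp (c * (u - t)) * F u i k := by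
      simp only [hG, hB, Matrix.add_apply, Matrix.smul_apply, Matrix.one_apply,
        Matrix.mul_apply, smul_eq_mul, mul_ite, mul_one, mul_zero, mul_add,
        Finset.sum_add_distrib, Finset.mul_sum]
      rw [Finset.sum_ite_eq' univ k (fun l => Real.exp (c * (u - t)) * F u i l * c)]
      simp only [mem_univ, if_true]
      ring_nf
    rw [this]; ring
  -- main positivity claim
  have key : ∀ ε : ℝ, 0 < ε → ∀ u ∈ Set.Icc t s, ∀ i k : n,
      0 < G u i k + ε * Real.exp ((2 * c * Fintype.card n + 1) * (u - t)) := by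
    intro ε hε
    set K : ℝ := 2 * c * Fintype.card n + 1 with hK
    set H : ℝ → n → n → ℝ := fun u i k => G u i k + ε * Real.exp (K * (u - t)) with hH
    have hHc : ∀ i k : n, Continuous fun u => H u i k := by
      intro i k
      exact (hGc i k).add (continuous_const.mul (Real.continuous_exp.comp
        (continuous_const.mul (continuous_id.sub continuous_const))))
    by_contra hcon
    push_neg at hcon
    obtain ⟨u₁, hu₁, i₁, k₁, hle⟩ := hcon
    set S : Set ℝ := {u ∈ Set.Icc t s | ∃ i k : n, H u i k ≤ 0} with hS
    have hSne : S.Nonempty := ⟨u₁, hu₁, i₁, k₁, hle⟩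
    have hSclosed : IsClosed S := by
      have : S = Set.Icc t s ∩ ⋃ i : n, ⋃ k : n, {u | H u i k ≤ 0} := by
        ext u
        simp only [hS, Set.mem_setOf_eq, Set.mem_inter_iff, Set.mem_iUnion]
      rw [this]
      exact isClosed_Icc.inter (isClosed_iUnion_of_finite fun i =>
        isClosed_iUnion_of_finite fun k => isClosed_le (hHc i k) continuous_const)
    have hScomp : IsCompact S := isCompact_Icc.of_isClosed_subset hSclosed
      (fun u hu => hu.1)
    have hustar := hScomp.sInf_mem hSne
    set w : ℝ := sInf S with hw
    obtain ⟨hwmem, i₂, k₂, hw0⟩ := hustar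
    -- H is positive at t
    have hHt : ∀ i k : n, 0 < H t i k := by
      intro i k
      have : G t i k = (1 : Matrix n n ℝ) i k := by simp [hG, hFt]
      rw [hH]
      simp only [this, sub_self, mul_zero, Real.exp_zero, mul_one]
      rcases eq_or_ne i k with h | h
      · simp [Matrix.one_apply, h]; linarith
      · simp [Matrix.one_apply, h]; linarith
    have htw : t < w := by
      rcases lt_or_eq_of_le hwmem.1 with h | h
      · exact h
      · exact absurd hw0 (by rw [← h]; exact not_le.2 (hHt i₂ k₂))
    -- everything before w is positive
    have hpos : ∀ v ∈ Set.Ico t w, ∀ i k : n, 0 < H v i k := by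
      intro v hv i k
      by_contra h
      push_neg at h
      have hvS : v ∈ S := ⟨⟨hv.1, hv.2.le.trans hwmem.2⟩, i, k, h⟩
      exact absurd (csInf_le hScomp.bddBelow hvS) (not_le.2 hv.2)
    -- at w all entries are ≥ 0 by continuity from the left
    have hnn : ∀ i k : n, 0 ≤ H w i k := by
      intro i k
      have htend : Filter.Tendsto (fun v => H v i k) (nhdsWithin w (Set.Iio w))
          (nhds (H w i k)) := ((hHc i k).tendsto w).mono_left nhdsWithin_le_nhds
      refine ge_of_tendsto htend ?_
      filter_upwards [Ioo_mem_nhdsLT_of_mem (Set.mem_Ioc.2 ⟨htw, le_refl w⟩)] with v hv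
      exact (hpos v ⟨hv.1.le, hv.2⟩ i k).le
    have hweq : H w i₂ k₂ = 0 := le_antisymm hw0 (hnn i₂ k₂)
    -- derivative of H · i₂ k₂ at w is positive
    set D : ℝ := ∑ l, G w i₂ l * B w l k₂ + ε * (Real.exp (K * (w - t)) * K) with hD
    have hHd : HasDerivAt (fun v => H v i₂ k₂) D w := by
      have h1 : HasDerivAt (fun v : ℝ => K * (v - t)) K w := by
        simpa using ((hasDerivAt_id w).sub_const t).const_mul K
      exact (hG' w i₂ k₂).add ((h1.exp).const_mul ε)
    have hGlb : ∀ l : n, -(ε * Real.exp (K * (w - t))) ≤ G w i₂ l := by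
      intro l
      have h0 := hnn i₂ l
      simp only [hH] at h0
      linarith
    have hDpos : 0 < D := by
      have hterm : ∀ l : n, -(ε * Real.exp (K * (w - t))) * (2 * c) ≤ G w i₂ l * B w l k₂ := by
        intro l
        rcases le_or_gt 0 (G w i₂ l) with h | h
        · have h2 := hBnn w hwmem l k₂
          have h4 : 0 ≤ G w i₂ l * B w l k₂ := mul_nonneg h h2
          have h5 : 0 ≤ ε * Real.exp (K * (w - t)) :=
            (mul_pos hε (Real.exp_pos _)).le
          nlinarith [mul_nonneg h5 hc0]
        · have h2 := hBle w hwmem l k₂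
          have h3 := hGlb l
          nlinarith [hBnn w hwmem l k₂]
      have hsum : -(ε * Real.exp (K * (w - t))) * (2 * c) * Fintype.card n
          ≤ ∑ l, G w i₂ l * B w l k₂ := by
        calc -(ε * Real.exp (K * (w - t))) * (2 * c) * Fintype.card n
            = ∑ _l : n, -(ε * Real.exp (K * (w - t))) * (2 * c) := by
              simp [Finset.sum_const, Finset.card_univ, nsmul_eq_mul]; ring
          _ ≤ ∑ l, G w i₂ l * B w l k₂ := Finset.sum_le_sum fun l _ => hterm l
      have hEpos : (0:ℝ) < ε * Real.exp (K * (w - t)) := mul_pos hε (Real.exp_pos _)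
      have heq : ε * (Real.exp (K * (w - t)) * K)
          = -(-(ε * Real.exp (K * (w - t))) * (2 * c) * Fintype.card n)
            + ε * Real.exp (K * (w - t)) := by rw [hK]; ring
      rw [hD]
      linarith [hsum]
    -- but H reached 0 at w from above: slope contradiction
    have hslope := hasDerivAt_iff_tendsto_slope.1 hHd
    have hev : ∀ᶠ v in nhdsWithin w {w}ᶜ, 0 < slope (fun v => H v i₂ k₂) w v :=
      hslope.eventually (eventually_gt_nhds hDpos)
    have hev2 : ∀ᶠ v in nhdsWithin w (Set.Iio w), 0 < slope (fun v => H v i₂ k₂) w v :=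
      hev.filter_mono (nhdsWithin_mono w fun v hv => ne_of_lt hv)
    have hne : (nhdsWithin w (Set.Iio w)).NeBot := by
      exact nhdsLT_neBot w
    obtain ⟨v, hv1, hv2⟩ := (hev2.and
      (Ioo_mem_nhdsLT_of_mem (Set.mem_Ioc.2 ⟨htw, le_refl w⟩) :
        Set.Ioo t w ∈ nhdsWithin w (Set.Iio w))).exists
    -- hv1 : slope > 0, hv2 : v ∈ Ioo t w
    have hHv := hpos v ⟨hv2.1.le, hv2.2⟩ i₂ k₂
    rw [slope_def_field, hweq] at hv1
    have hvw : v - w < 0 := by linarith [hv2.2]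
    have : (H v i₂ k₂ - 0) / (v - w) < 0 := by
      apply div_neg_of_pos_of_neg
      · simpa using hHv
      · exact hvw
    linarith
  -- conclude
  by_contra hneg
  push_neg at hneg
  have hexp := Real.exp_pos (c * (s - t))
  have hGneg : G s i k < 0 := mul_neg_of_pos_of_neg hexp hneg
  set ε : ℝ := -G s i k /
    (2 * Real.exp ((2 * c * Fintype.card n + 1) * (s - t))) with hε
  have hεpos : 0 < ε := div_pos (by linarith) (by positivity)
  have hkey := key ε hεpos s (Set.mem_Icc.2 ⟨hts, le_refl s⟩) i k
  have h2 : ε * Real.exp ((2 * c * Fintype.card n + 1) * (s - t)) = -G s i k / 2 := by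
    rw [hε]
    field_simp
  rw [h2] at hkey
  linarith


lemma row_sum_one {n : Type*} [Fintype n] [DecidableEq n]
    (A : ℝ → Matrix n n ℝ)
    (hrow : ∀ u : ℝ, ∀ e : n, ∑ f, A u e f = 0)
    (F : ℝ → Matrix n n ℝ) (t : ℝ) (hFt : F t = 1)
    (hF' : ∀ (u : ℝ) (i k : n), HasDerivAt (fun v => F v i k) ((F u * A u) i k) u)
    (s : ℝ) (e : n) : ∑ f, F s e f = 1 := by
  classical
  have hd : ∀ u : ℝ, HasDerivAt (fun v => ∑ f, F v e f) 0 u := by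
    intro u
    have h1 : HasDerivAt (fun v => ∑ f, F v e f) (∑ f, (F u * A u) e f) u :=
      HasDerivAt.fun_sum (fun f _ => hF' u e f)
    have h2 : ∑ f, (F u * A u) e f = 0 := by
      calc ∑ f, (F u * A u) e f = ∑ f, ∑ l, F u e l * A u l f := by
            simp [Matrix.mul_apply]
        _ = ∑ l, F u e l * ∑ f, A u l f := by
            rw [Finset.sum_comm]; simp [Finset.mul_sum]
        _ = 0 := by simp [hrow]
    rwa [h2] at h1
  have hconst := is_const_of_deriv_eq_zero
    (f := fun v => ∑ f, F v e f)
    (fun u => (hd u).differentiableAt) (fun u => (hd u).deriv) s t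
  rw [hconst, hFt]
  simp [Matrix.one_apply]


lemma row_sum_le_one {n : Type*} [Fintype n] [DecidableEq n]
    (A : ℝ → Matrix n n ℝ)
    (hrowle : ∀ u : ℝ, ∀ e : n, ∑ f, A u e f ≤ 0)
    (F : ℝ → Matrix n n ℝ) (t : ℝ) (hFt : F t = 1)
    (hF' : ∀ (u : ℝ) (i k : n), HasDerivAt (fun v => F v i k) ((F u * A u) i k) u)
    (hnn : ∀ u : ℝ, t ≤ u → ∀ i k : n, 0 ≤ F u i k)
    {s : ℝ} (hts : t ≤ s) (e : n) : ∑ f, F s e f ≤ 1 := by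
  classical
  have hd : ∀ u : ℝ, HasDerivAt (fun v => ∑ f, F v e f)
      (∑ l, F u e l * ∑ f, A u l f) u := by
    intro u
    have h1 : HasDerivAt (fun v => ∑ f, F v e f) (∑ f, (F u * A u) e f) u :=
      HasDerivAt.fun_sum (fun f _ => hF' u e f)
    have h2 : ∑ f, (F u * A u) e f = ∑ l, F u e l * ∑ f, A u l f := by
      calc ∑ f, (F u * A u) e f = ∑ f, ∑ l, F u e l * A u l f := by
            simp [Matrix.mul_apply]
        _ = ∑ l, F u e l * ∑ f, A u l f := by
            rw [Finset.sum_comm]; simp [Finset.mul_sum]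
    rwa [h2] at h1
  have hcont : ContinuousOn (fun v => ∑ f, F v e f) (Set.Icc t s) :=
    (continuous_finset_sum _ fun f _ => continuous_iff_continuousAt.2
      fun u => (hF' u e f).continuousAt).continuousOn
  have hanti : AntitoneOn (fun v => ∑ f, F v e f) (Set.Icc t s) := by
    apply antitoneOn_of_deriv_nonpos (convex_Icc t s) hcont
    · intro u hu
      exact (hd u).differentiableAt.differentiableWithinAt
    · intro u hu
      rw [interior_Icc] at hu
      rw [(hd u).deriv]
      apply Finset.sum_nonpos
      intro l _
      exact mul_nonpos_of_nonneg_of_nonpos (hnn u hu.1.le e l) (hrowle u l)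
  calc ∑ f, F s e f ≤ ∑ f, F t e f :=
        hanti ⟨le_refl t, hts⟩ ⟨hts, le_refl s⟩ hts
    _ = 1 := by rw [hFt]; simp [Matrix.one_apply]


/-- For an intensity matrix function M on the aggregated state space E = Σ j, Fin (d j),
with F_M the product integral of M and F_jj that of the diagonal block M_jj, the matrix
G(t,s) = F_M(t,r) E_j F_jj(r,s) has nonnegative entries, all bounded by 1, for t ≤ r ≤ s. -/
theorem aggregate_block_probability {J : Type*} [Fintype J] [DecidableEq J] (d : J → ℕ)
    (M : ℝ → Matrix ((j : J) × Fin (d j)) ((j : J) × Fin (d j)) ℝ)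
    (hMc : Continuous M)
    (hoff : ∀ t : ℝ, ∀ e f : (j : J) × Fin (d j), e ≠ f → 0 ≤ M t e f)
    (hrow : ∀ t : ℝ, ∀ e : (j : J) × Fin (d j), ∑ f, M t e f = 0)
    (FM : ℝ → ℝ → Matrix ((j : J) × Fin (d j)) ((j : J) × Fin (d j)) ℝ)
    (hFMinit : ∀ t : ℝ, FM t t = 1)
    (hFMode : ∀ t s : ℝ, ∀ e f : (j : J) × Fin (d j),
      HasDerivAt (fun u => FM t u e f) ((FM t s * M s) e f) s)
    (j : J)
    (Fjj : ℝ → ℝ → Matrix (Fin (d j)) (Fin (d j)) ℝ)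
    (hFjjinit : ∀ t : ℝ, Fjj t t = 1)
    (hFjjode : ∀ t s : ℝ, ∀ a b : Fin (d j),
      HasDerivAt (fun u => Fjj t u a b)
        ((Fjj t s * Matrix.of fun a' b' => M s ⟨j, a'⟩ ⟨j, b'⟩) a b) s)
    (Ej : Matrix ((j : J) × Fin (d j)) (Fin (d j)) ℝ)
    (hEj : Ej = Matrix.of fun e a => if e = ⟨j, a⟩ then (1 : ℝ) else 0)
    (t r s : ℝ) (htr : t ≤ r) (hrs : r ≤ s) :
    (∀ (e : (j : J) × Fin (d j)) (a : Fin (d j)), 0 ≤ (FM t r * Ej * Fjj r s) e a)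
    ∧ ∀ (e : (j : J) × Fin (d j)) (a : Fin (d j)), (FM t r * Ej * Fjj r s) e a ≤ 1 := by
  classical
  -- entrywise continuity of M
  have hMec : ∀ e f : (j : J) × Fin (d j), Continuous fun u => M u e f := by
    intro e f
    exact (continuous_apply f).comp ((continuous_apply e).comp hMc)
  -- the diagonal block
  set Mjj : ℝ → Matrix (Fin (d j)) (Fin (d j)) ℝ :=
    fun u => Matrix.of fun a b => M u ⟨j, a⟩ ⟨j, b⟩ with hMjj
  have hMjjc : ∀ a b : Fin (d j), Continuous fun u => Mjj u a b := by
    intro a b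
    exact hMec ⟨j, a⟩ ⟨j, b⟩
  have hMjjoff : ∀ u : ℝ, ∀ a b : Fin (d j), a ≠ b → 0 ≤ Mjj u a b := by
    intro u a b hab
    exact hoff u ⟨j, a⟩ ⟨j, b⟩ (by simp [hab])
  -- block row sums are nonpositive
  have hblock : ∀ u : ℝ, ∀ a : Fin (d j), ∑ b, Mjj u a b ≤ 0 := by
    intro u a
    have h0 := hrow u ⟨j, a⟩
    rw [← Finset.univ_sigma_univ, Finset.sum_sigma] at h0
    rw [← Finset.add_sum_erase _ _ (mem_univ j)] at h0
    have hrest : 0 ≤ ∑ j' ∈ univ.erase j, ∑ b, M u ⟨j, a⟩ ⟨j', b⟩ := by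
      apply Finset.sum_nonneg
      intro j' hj'
      apply Finset.sum_nonneg
      intro b _
      exact hoff u ⟨j, a⟩ ⟨j', b⟩ (by simp [Ne.symm (Finset.mem_erase.1 hj').1])
    have : ∑ b, Mjj u a b = ∑ b, M u ⟨j, a⟩ ⟨j, b⟩ := rfl
    rw [this]
    linarith
  -- nonnegativity of the two propagators
  have hFMnn : ∀ u : ℝ, t ≤ u → ∀ e f : (j : J) × Fin (d j), 0 ≤ FM t u e f :=
    fun u hu e f => entries_nonneg M hMec hoff (FM t) t (hFMinit t)
      (fun v => hFMode t v) hu e f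
  have hFjjnn : ∀ u : ℝ, r ≤ u → ∀ a b : Fin (d j), 0 ≤ Fjj r u a b :=
    fun u hu a b => entries_nonneg Mjj hMjjc hMjjoff (Fjj r) r (hFjjinit r)
      (fun v => hFjjode r v) hu a b
  -- row sums
  have hFMrow : ∀ e : (j : J) × Fin (d j), ∑ f, FM t r e f = 1 :=
    fun e => row_sum_one M hrow (FM t) t (hFMinit t) (fun v => hFMode t v) r e
  have hFjjrow : ∀ a : Fin (d j), ∑ b, Fjj r s a b ≤ 1 :=
    fun a => row_sum_le_one Mjj hblock (Fjj r) r (hFjjinit r)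
      (fun v => hFjjode r v) hFjjnn hrs a
  -- entry of the product
  have hprod : ∀ (e : (j : J) × Fin (d j)) (a : Fin (d j)),
      (FM t r * Ej * Fjj r s) e a = ∑ a', FM t r e ⟨j, a'⟩ * Fjj r s a' a := by
    intro e a
    have h1 : ∀ a' : Fin (d j), (FM t r * Ej) e a' = FM t r e ⟨j, a'⟩ := by
      intro a'
      rw [Matrix.mul_apply, hEj]
      simp [Matrix.of_apply, mul_ite]
    rw [Matrix.mul_apply]
    exact Finset.sum_congr rfl fun a' _ => by rw [h1]
  -- partial row sums of FM bounded by 1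
  have hpartial : ∀ e : (j : J) × Fin (d j), ∑ a', FM t r e ⟨j, a'⟩ ≤ 1 := by
    intro e
    have h0 := hFMrow e
    rw [← Finset.univ_sigma_univ, Finset.sum_sigma] at h0
    rw [← h0]
    exact Finset.single_le_sum
      (f := fun j' => ∑ a' : Fin (d j'), FM t r e ⟨j', a'⟩)
      (fun j' _ => Finset.sum_nonneg fun a' _ => hFMnn r htr e ⟨j', a'⟩)
      (mem_univ j)
  constructor
  · intro e a
    rw [hprod]
    exact Finset.sum_nonneg fun a' _ =>
      mul_nonneg (hFMnn r htr e ⟨j, a'⟩) (hFjjnn s hrs a' a)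
  · intro e a
    rw [hprod]
    have hFjjle : ∀ a' : Fin (d j), Fjj r s a' a ≤ 1 := by
      intro a'
      calc Fjj r s a' a ≤ ∑ b, Fjj r s a' b :=
            Finset.single_le_sum (fun b _ => hFjjnn s hrs a' b) (mem_univ a)
        _ ≤ 1 := hFjjrow a'
    calc ∑ a', FM t r e ⟨j, a'⟩ * Fjj r s a' a
        ≤ ∑ a', FM t r e ⟨j, a'⟩ := by
          apply Finset.sum_le_sum
          intro a' _
          have := mul_le_mul_of_nonneg_left (hFjjle a') (hFMnn r htr e ⟨j, a'⟩)
          simpa using this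
      _ ≤ 1 := hpartial e
end
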